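/- Elliptical potential lemma (per-arm version): Let x_1, …, x_n ∈ ℝ^d with ‖x_s‖₂ ≤ 1, V_0 = I, V_s = V_{s-1} + x_s x_s^T. Then ∑_{s=1}^n min{1, x_s^T V_{s-1}^{-1} x_s} ≤ 2 d log((d + n)/d). -/

import Mathlib

open Matrix Finset

/-- AM–GM for a finite family of nonnegative reals. -/
lemma aux_amgm {d : ℕ} (hd : 0 < d) (f : Fin d → ℝ) (hf : ∀ i, 0 ≤ f i) :
    ∏ i, f i ≤ ((∑ i, f i) / d) ^ d := by
  have hd' : (d : ℝ) ≠ 0 := Nat.cast_ne_zero.mpr hd.ne'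
  have h := Real.geom_mean_le_arith_mean_weighted Finset.univ (fun _ => (d : ℝ)⁻¹) f
    (fun i _ => by positivity)
    (by simp [Finset.sum_const, Finset.card_univ]; field_simp)
    (fun i _ => hf i)
  have h2 : (∏ i, f i ^ ((d : ℝ)⁻¹)) ^ d = ∏ i, f i := by
    rw [← Finset.prod_pow]
    refine Finset.prod_congr rfl fun i _ => ?_
    rw [← Real.rpow_natCast (f i ^ ((d : ℝ)⁻¹)) d, ← Real.rpow_mul (hf i),
      inv_mul_cancel₀ hd', Real.rpow_one]
  calc ∏ i, f i = (∏ i, f i ^ ((d : ℝ)⁻¹)) ^ d := h2.symm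
    _ ≤ ((∑ i, f i) / d) ^ d := by
        apply pow_le_pow_left₀ (Finset.prod_nonneg fun i _ => Real.rpow_nonneg (hf i) _)
        calc ∏ i, f i ^ ((d : ℝ)⁻¹) ≤ ∑ i, (d : ℝ)⁻¹ * f i := h
          _ = (∑ i, f i) / d := by rw [← Finset.mul_sum]; ring

/-- `min 1 u ≤ 2 log (1 + u)` for nonnegative `u`. -/
lemma aux_min_le_log {u : ℝ} (hu : 0 ≤ u) : min 1 u ≤ 2 * Real.log (1 + u) := by
  have hlog2 : (1 : ℝ) / 2 ≤ Real.log 2 := by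
    have := Real.log_two_gt_d9; linarith
  rcases le_or_gt u 1 with h | h
  · rw [min_eq_right h]
    have key : u * Real.log 2 ≤ Real.log (1 + u) := by
      have hconc := strictConcaveOn_log_Ioi.concaveOn.2 (Set.mem_Ioi.mpr one_pos)
        (Set.mem_Ioi.mpr two_pos) (sub_nonneg.mpr h) hu (by ring)
      have e1 : (1 - u) • (1 : ℝ) + u • (2 : ℝ) = 1 + u := by
        rw [smul_eq_mul, smul_eq_mul]; ring
      rw [e1] at hconc
      simpa [smul_eq_mul, Real.log_one] using hconc
    nlinarith [key, hlog2, hu]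
  · rw [min_eq_left h.le]
    have : Real.log 2 ≤ Real.log (1 + u) := Real.log_le_log two_pos (by linarith)
    linarith

/-- Trace of a real hermitian matrix equals the sum of its eigenvalues. -/
lemma aux_trace_eq {d : ℕ} {A : Matrix (Fin d) (Fin d) ℝ} (hA : A.IsHermitian) :
    A.trace = ∑ i, hA.eigenvalues i := by
  rw [hA.trace_eq_sum_eigenvalues]
  simp

/-- elliptical potential lemma with identity regularization. -/
theorem stmt_12 (d n : ℕ) (hd : 0 < d) (x : ℕ → Fin d → ℝ)
    (hx : ∀ s < n, (∑ i, (x s i) ^ 2) ≤ 1)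
    (V : ℕ → Matrix (Fin d) (Fin d) ℝ)
    (hV0 : V 0 = 1)
    (hVs : ∀ s < n, V (s + 1) = V s + Matrix.vecMulVec (x s) (x s)) :
    (∑ s ∈ Finset.range n, min 1 (x s ⬝ᵥ ((V s)⁻¹ *ᵥ x s))) ≤
      2 * d * Real.log ((d + n) / d) := by
  -- positive definiteness of all V s
  have hPD : ∀ s, s ≤ n → (V s).PosDef := by
    intro s
    induction s with
    | zero => intro _; rw [hV0]; exact Matrix.PosDef.one
    | succ m ih =>
      intro h
      have hm : m < n := h
      rw [hVs m hm]
      refine (ih hm.le).add_posSemidef ?_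
      rw [Matrix.vecMulVec_eq Unit]
      have e : Matrix.replicateCol Unit (x m) = (Matrix.replicateRow Unit (x m))ᴴ := by
        rw [Matrix.conjTranspose_replicateRow]; simp
      rw [e]
      exact Matrix.posSemidef_conjTranspose_mul_self _
  -- nonnegativity of the quadratic forms
  have hunn : ∀ s < n, 0 ≤ x s ⬝ᵥ ((V s)⁻¹ *ᵥ x s) := by
    intro s hs
    have := ((hPD s hs.le).inv).posSemidef.re_dotProduct_nonneg (x s)
    simpa using this
  -- determinant identity
  have hdet : ∀ s < n, (V (s + 1)).det
      = (V s).det * (1 + x s ⬝ᵥ ((V s)⁻¹ *ᵥ x s)) := by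
    intro s hs
    rw [hVs s hs, Matrix.vecMulVec_eq Unit,
      Matrix.det_add_replicateCol_mul_replicateRow (isUnit_iff_ne_zero.mpr (hPD s hs.le).det_pos.ne')]
    congr 1
    rw [Matrix.det_unique]
    simp only [Matrix.add_apply, Matrix.one_apply_eq]
    congr 1
    simp [Matrix.mul_apply, Matrix.replicateRow, Matrix.replicateCol, Matrix.mulVec, dotProduct,
      Finset.sum_mul, Finset.mul_sum, mul_comm, mul_left_comm, mul_assoc]
    rw [Finset.sum_comm]
    refine Finset.sum_congr rfl fun a _ => Finset.sum_congr rfl fun b _ => by ring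
  -- trace bound
  have htr : ∀ s, s ≤ n → (V s).trace ≤ (d : ℝ) + s := by
    intro s
    induction s with
    | zero => intro _; rw [hV0, Matrix.trace_one]; simp
    | succ m ih =>
      intro h
      have hm : m < n := h
      rw [hVs m hm, Matrix.trace_add]
      have e : (Matrix.vecMulVec (x m) (x m)).trace = ∑ i, x m i ^ 2 := by
        simp [Matrix.trace, Matrix.diag, Matrix.vecMulVec_apply, sq]
      rw [e]
      have h1 := hx m hm
      have h2 := ih hm.le
      push_cast
      linarith
  -- bound det (V n)
  have hH : (V n).IsHermitian := (hPD n le_rfl).isHermitian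
  have hdetn : (V n).det ≤ (((d : ℝ) + n) / d) ^ d := by
    have heig : (V n).det = ∏ i, hH.eigenvalues i := by
      rw [hH.det_eq_prod_eigenvalues]; norm_num
    have hnn : ∀ i, 0 ≤ hH.eigenvalues i :=
      fun i => (hPD n le_rfl).posSemidef.eigenvalues_nonneg i
    have hamgm := aux_amgm hd hH.eigenvalues hnn
    have hsum : ∑ i, hH.eigenvalues i ≤ (d : ℝ) + n := by
      rw [← aux_trace_eq hH]; exact htr n le_rfl
    have hd' : (0 : ℝ) < d := Nat.cast_pos.mpr hd
    calc (V n).det = ∏ i, hH.eigenvalues i := heig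
      _ ≤ ((∑ i, hH.eigenvalues i) / d) ^ d := hamgm
      _ ≤ (((d : ℝ) + n) / d) ^ d := by
          apply pow_le_pow_left₀ (div_nonneg (Finset.sum_nonneg fun i _ => hnn i) hd'.le)
          gcongr
  -- assemble
  have step1 : (∑ s ∈ Finset.range n, min 1 (x s ⬝ᵥ ((V s)⁻¹ *ᵥ x s)))
      ≤ ∑ s ∈ Finset.range n,
          2 * (Real.log (V (s + 1)).det - Real.log (V s).det) := by
    refine Finset.sum_le_sum fun s hs => ?_
    have hsn := Finset.mem_range.mp hs
    have h1 : (0 : ℝ) < (V s).det := (hPD s hsn.le).det_pos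
    have h2 : (0 : ℝ) < (V (s + 1)).det := (hPD (s + 1) hsn).det_pos
    have e2 : 1 + x s ⬝ᵥ ((V s)⁻¹ *ᵥ x s) = (V (s + 1)).det / (V s).det := by
      rw [hdet s hsn]; field_simp
    have := aux_min_le_log (hunn s hsn)
    rw [e2, Real.log_div h2.ne' h1.ne'] at this
    exact this
  have step2 : ∑ s ∈ Finset.range n,
      2 * (Real.log (V (s + 1)).det - Real.log (V s).det)
      = 2 * Real.log (V n).det := by
    rw [← Finset.mul_sum, Finset.sum_range_sub (fun s => Real.log (V s).det),
      hV0, Matrix.det_one, Real.log_one, sub_zero]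
  have step3 : Real.log (V n).det ≤ (d : ℝ) * Real.log (((d : ℝ) + n) / d) := by
    have hd' : (0 : ℝ) < d := Nat.cast_pos.mpr hd
    have hbase : (0 : ℝ) < ((d : ℝ) + n) / d := by positivity
    calc Real.log (V n).det ≤ Real.log ((((d : ℝ) + n) / d) ^ d) :=
          Real.log_le_log (hPD n le_rfl).det_pos hdetn
      _ = (d : ℝ) * Real.log (((d : ℝ) + n) / d) := by
          rw [Real.log_pow]
  calc (∑ s ∈ Finset.range n, min 1 (x s ⬝ᵥ ((V s)⁻¹ *ᵥ x s)))
      ≤ 2 * Real.log (V n).det := step1.trans_eq step2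
    _ ≤ 2 * ((d : ℝ) * Real.log (((d : ℝ) + n) / d)) := by linarith
    _ = 2 * d * Real.log (((d : ℝ) + n) / d) := by ring
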